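/- For every fixed integer n ≥ 3 and all a ≥ 0, k ≥ 0, b ≥ 1, the Toads and Frogs position L T^a F □ T^k F T □ F^b, where L is any finite sequence over {T,F} ending in F (possibly interpreted as the position T^a F □ T^k F T □ F^b with the prefix L), has game value ≤ 1/2^n. -/

import Mathlib

universe u

namespace SetTheory

/-- Pre-games, as in the older Mathlib (`SetTheory.PGame`), since removed from Mathlib. -/
inductive PGame : Type (u + 1)
  | mk : ∀ α β : Type u, (α → PGame) → (β → PGame) → PGame

namespace PGame

instance : Zero PGame.{u} := ⟨⟨PEmpty, PEmpty, PEmpty.elim, PEmpty.elim⟩⟩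

instance : One PGame.{u} := ⟨⟨PUnit, PEmpty, fun _ => 0, PEmpty.elim⟩⟩

/-- Negation of a pre-game, swapping the roles of the players. -/
def neg : PGame.{u} → PGame.{u}
  | mk l r L R => mk r l (fun i => neg (R i)) (fun i => neg (L i))

instance : Neg PGame.{u} := ⟨neg⟩

/-- The pair `(x ≤ y, x ⧏ y)`, defined by simultaneous recursion as in the older Mathlib:
`x ≤ y ↔ (∀ i, xL i ⧏ y) ∧ ∀ j, x ⧏ yR j` and
`x ⧏ y ↔ (∃ i, x ≤ yL i) ∨ ∃ j, xR j ≤ y`. -/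
noncomputable def leLf (x : PGame.{u}) : PGame.{u} → Prop × Prop :=
  PGame.rec (motive := fun _ => PGame.{u} → Prop × Prop)
    (fun xl xr xL xR ihxL ihxR y =>
      PGame.rec (motive := fun _ => Prop × Prop)
        (fun yl yr yL yR ihyL ihyR =>
          ((∀ i, (ihxL i (mk yl yr yL yR)).2) ∧ ∀ j, (ihyR j).2,
            (∃ i, (ihyL i).1) ∨ ∃ j, (ihxR j (mk yl yr yL yR)).1))
        y) x

instance : LE PGame.{u} := ⟨fun x y => (leLf x y).1⟩

/-- `powHalf n` is the pre-game `1/2^n`, as in the older Mathlib. -/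
def powHalf : ℕ → PGame.{u}
  | 0 => 1
  | n + 1 => ⟨PUnit, PUnit, 0, fun _ => powHalf n⟩

end PGame

end SetTheory

open SetTheory

inductive Cell : Type
  | T | F | E
deriving DecidableEq

/-- Positions reachable from `l` by a single Toad (Left) move:
a Toad steps right into an empty square, or jumps over one adjacent Frog
into the empty square beyond. -/
def toadMoves : List Cell → List (List Cell)
  | [] => []
  | c :: rest =>
    (match c, rest with
     | Cell.T, Cell.E :: r => [Cell.E :: Cell.T :: r]
     | Cell.T, Cell.F :: Cell.E :: r => [Cell.E :: Cell.F :: Cell.T :: r]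
     | _, _ => []) ++ (toadMoves rest).map (c :: ·)

/-- Positions reachable from `l` by a single Frog (Right) move. -/
def frogMoves : List Cell → List (List Cell)
  | [] => []
  | c :: rest =>
    (match c, rest with
     | Cell.E, Cell.F :: r => [Cell.F :: Cell.E :: r]
     | Cell.E, Cell.T :: Cell.F :: r => [Cell.F :: Cell.T :: Cell.E :: r]
     | _, _ => []) ++ (frogMoves rest).map (c :: ·)

/-- A weight which strictly decreases with every legal move: each Toad
contributes the number of squares strictly to its right, each Frog the number
of squares strictly to its left. -/
def wt : List Cell → ℕ
  | [] => 0
  | c :: rest =>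
    (if c = Cell.T then rest.length else 0) + rest.countP (· = Cell.F) + wt rest

/-- Game tree with fuel; since `wt` strictly decreases along moves and
positions of weight `0` have no moves, `gameAux n l` is the true game
tree of `l` whenever `wt l ≤ n`. -/
def gameAux : ℕ → List Cell → PGame
  | 0, _ => 0
  | n + 1, l =>
    PGame.mk {m // m ∈ toadMoves l} {m // m ∈ frogMoves l}
      (fun m => gameAux n m.1) (fun m => gameAux n m.1)

/-- The game (PGame) associated to a Toads and Frogs position. -/
def tfGame (l : List Cell) : PGame := gameAux (wt l + 1) l

/-- The game `{x | y}` with a single Left option `x` and single Right option `y`. -/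
def gmk (x y : PGame) : PGame :=
  PGame.mk PUnit PUnit (fun _ => x) (fun _ => y)

/-- The canonical game of a natural number. -/
def natGame : ℕ → PGame
  | 0 => 0
  | n + 1 => PGame.mk PUnit PEmpty (fun _ => natGame n) (fun x => x.elim)

/-- The canonical game of an integer. -/
def intGame : ℤ → PGame
  | Int.ofNat n => natGame n
  | Int.negSucc n => -natGame (n + 1)

/-- `(TF)^b` : the block `TF` repeated `b` times. -/
def tfBlock (b : ℕ) : List Cell := (List.replicate b [Cell.T, Cell.F]).flatten

namespace SetTheory.PGame

def LF (x y : PGame.{u}) : Prop := (leLf x y).2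

infix:50 " ⧏ " => SetTheory.PGame.LF

def LeftMoves : PGame.{u} → Type u
  | mk l _ _ _ => l

def RightMoves : PGame.{u} → Type u
  | mk _ r _ _ => r

def moveLeft : ∀ g : PGame.{u}, LeftMoves g → PGame.{u}
  | mk _ _ L _ => L

def moveRight : ∀ g : PGame.{u}, RightMoves g → PGame.{u}
  | mk _ _ _ R => R

@[simp]
theorem moveLeft_mk {xl xr : Type u} {xL : xl → PGame.{u}} {xR : xr → PGame.{u}} :
    (mk xl xr xL xR).moveLeft = xL := rfl

@[simp]
theorem moveRight_mk {xl xr : Type u} {xL : xl → PGame.{u}} {xR : xr → PGame.{u}} :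
    (mk xl xr xL xR).moveRight = xR := rfl

theorem le_iff_forall_lf {x y : PGame.{u}} :
    x ≤ y ↔ (∀ i, x.moveLeft i ⧏ y) ∧ ∀ j, x ⧏ y.moveRight j := by
  cases x; cases y; exact Iff.rfl

theorem lf_iff_exists_le {x y : PGame.{u}} :
    x ⧏ y ↔ (∃ i, x ≤ y.moveLeft i) ∨ ∃ j, x.moveRight j ≤ y := by
  cases x; cases y; exact Iff.rfl

theorem pg_trans_aux : ∀ x y z : PGame.{u},
    (x ≤ y → y ≤ z → x ≤ z) ∧ (x ≤ y → y ⧏ z → x ⧏ z) ∧ (x ⧏ y → y ≤ z → x ⧏ z) := by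
  intro x
  induction x with
  | mk xl xr xL xR ihxL ihxR =>
  intro y
  induction y with
  | mk yl yr yL yR ihyL ihyR =>
  intro z
  induction z with
  | mk zl zr zL zR ihzL ihzR =>
  refine ⟨fun h1 h2 => ?_, fun h1 h2 => ?_, fun h1 h2 => ?_⟩
  · rw [le_iff_forall_lf]
    exact ⟨fun i => (ihxL i _ _).2.2 ((le_iff_forall_lf.1 h1).1 i) h2,
      fun j => (ihzR j).2.1 h1 ((le_iff_forall_lf.1 h2).2 j)⟩
  · rcases lf_iff_exists_le.1 h2 with ⟨i, hi⟩ | ⟨j, hj⟩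
    · exact lf_iff_exists_le.2 (Or.inl ⟨i, (ihzL i).1 h1 hi⟩)
    · exact (ihyR j _).2.2 ((le_iff_forall_lf.1 h1).2 j) hj
  · rcases lf_iff_exists_le.1 h1 with ⟨i, hi⟩ | ⟨j, hj⟩
    · exact (ihyL i _).2.1 hi ((le_iff_forall_lf.1 h2).1 i)
    · exact lf_iff_exists_le.2 (Or.inr ⟨j, (ihxR j _ _).1 hj h2⟩)

theorem pg_le_trans {x y z : PGame.{u}} (h1 : x ≤ y) (h2 : y ≤ z) : x ≤ z :=
  (pg_trans_aux x y z).1 h1 h2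

theorem pg_le_refl : ∀ x : PGame.{u}, x ≤ x := by
  intro x
  induction x with
  | mk xl xr xL xR ihL ihR =>
  rw [le_iff_forall_lf]
  exact ⟨fun i => lf_iff_exists_le.2 (Or.inl ⟨i, ihL i⟩),
    fun j => lf_iff_exists_le.2 (Or.inr ⟨j, ihR j⟩)⟩

theorem le_zero_lf {x : PGame.{u}} : x ≤ 0 ↔ ∀ i, x.moveLeft i ⧏ 0 := by
  rw [le_iff_forall_lf]
  exact ⟨fun h => h.1, fun h => ⟨h, fun j => PEmpty.elim j⟩⟩

theorem lf_zero_le {x : PGame.{u}} : x ⧏ 0 ↔ ∃ j, x.moveRight j ≤ 0 := by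
  rw [lf_iff_exists_le]
  constructor
  · rintro (⟨i, _⟩ | h)
    · exact PEmpty.elim i
    · exact h
  · exact fun h => Or.inr h

theorem zero_lf_le {x : PGame.{u}} : 0 ⧏ x ↔ ∃ i, 0 ≤ x.moveLeft i := by
  rw [lf_iff_exists_le]
  constructor
  · rintro (h | ⟨j, _⟩)
    · exact h
    · exact PEmpty.elim j
  · exact fun h => Or.inl h

theorem lf_of_moveRight_le {x y : PGame.{u}} {j : x.RightMoves} (h : x.moveRight j ≤ y) :
    x ⧏ y :=
  lf_iff_exists_le.2 (Or.inr ⟨j, h⟩)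

def star : PGame.{u} := ⟨PUnit, PUnit, fun _ => 0, fun _ => 0⟩

@[simp]
theorem star_moveLeft (i : star.{u}.LeftMoves) : star.{u}.moveLeft i = 0 := rfl

@[simp]
theorem star_moveRight (j : star.{u}.RightMoves) : star.{u}.moveRight j = 0 := rfl

theorem zero_lf_powHalf (n : ℕ) : (0 : PGame.{u}) ⧏ powHalf n := by
  rw [zero_lf_le]
  cases n
  · exact ⟨PUnit.unit, pg_le_refl 0⟩
  · exact ⟨PUnit.unit, pg_le_refl 0⟩

theorem zero_le_powHalf (n : ℕ) : (0 : PGame.{u}) ≤ powHalf n := by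
  rw [le_iff_forall_lf]
  refine ⟨fun i => PEmpty.elim i, fun j => ?_⟩
  cases n
  · exact PEmpty.elim j
  · exact zero_lf_powHalf _

end SetTheory.PGame

theorem LE.le.trans_lf {x y z : SetTheory.PGame.{u}} (h1 : x ≤ y) (h2 : y ⧏ z) : x ⧏ z :=
  (SetTheory.PGame.pg_trans_aux x y z).2.1 h1 h2

open PGame

open Cell

lemma toadMoves_spec : ∀ {l m : List Cell}, m ∈ toadMoves l →
    wt m < wt l ∧ m.length = l.length ∧ m.countP (· = Cell.F) = l.countP (· = Cell.F) := by
  intro l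
  induction l with
  | nil => intro m h; simp [toadMoves] at h
  | cons c rest ih =>
    intro m h
    simp only [toadMoves, List.mem_append, List.mem_map] at h
    rcases h with h | ⟨x, hx, rfl⟩
    · rcases c with _ | _ | _
      · rcases rest with _ | ⟨c2, r2⟩
        · simp at h
        · rcases c2 with _ | _ | _
          · simp at h
          · rcases r2 with _ | ⟨c3, r3⟩
            · simp at h
            · rcases c3 with _ | _ | _
              · simp at h
              · simp at h
              · simp at h
                subst h
                refine ⟨?_, by simp, ?_⟩
                · simp [wt, List.countP_cons]; omega
                · simp [List.countP_cons]
          · simp at h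
            subst h
            refine ⟨?_, by simp, ?_⟩
            · simp [wt, List.countP_cons]; omega
            · simp [List.countP_cons]
      · simp at h
      · simp at h
    · obtain ⟨h1, h2, h3⟩ := ih hx
      refine ⟨?_, by simp [h2], ?_⟩
      · simp only [wt, h2, h3]; omega
      · simp [List.countP_cons, h3]

lemma frogMoves_spec : ∀ {l m : List Cell}, m ∈ frogMoves l →
    wt m < wt l ∧ m.length = l.length ∧ m.countP (· = Cell.F) = l.countP (· = Cell.F) := by
  intro l
  induction l with
  | nil => intro m h; simp [frogMoves] at h
  | cons c rest ih =>
    intro m h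
    simp only [frogMoves, List.mem_append, List.mem_map] at h
    rcases h with h | ⟨x, hx, rfl⟩
    · rcases c with _ | _ | _
      · simp at h
      · simp at h
      · rcases rest with _ | ⟨c2, r2⟩
        · simp at h
        · rcases c2 with _ | _ | _
          · rcases r2 with _ | ⟨c3, r3⟩
            · simp at h
            · rcases c3 with _ | _ | _
              · simp at h
              · simp at h
                subst h
                refine ⟨?_, by simp, ?_⟩
                · simp [wt, List.countP_cons] <;> omega
                · simp [List.countP_cons]
              · simp at h
          · simp at h
            subst h
            refine ⟨?_, by simp, ?_⟩
            · simp [wt, List.countP_cons] <;> omega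
            · simp [List.countP_cons]
          · simp at h
    · obtain ⟨h1, h2, h3⟩ := ih hx
      refine ⟨?_, by simp [h2], ?_⟩
      · simp only [wt, h2, h3]; omega
      · simp [List.countP_cons, h3]

lemma gameAux_congr : ∀ (w : ℕ) {l : List Cell} {n m : ℕ}, wt l ≤ w → wt l < n → wt l < m →
    gameAux n l = gameAux m l := by
  intro w
  induction w with
  | zero =>
    intro l n m h hn hm
    obtain ⟨n, rfl⟩ : ∃ k, n = k + 1 := ⟨n - 1, by omega⟩
    obtain ⟨m, rfl⟩ : ∃ k, m = k + 1 := ⟨m - 1, by omega⟩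
    simp only [gameAux]
    have hL : (fun mv : {x // x ∈ toadMoves l} => gameAux n mv.1)
        = fun mv => gameAux m mv.1 := by
      funext mv; exact absurd (toadMoves_spec mv.2).1 (by omega)
    have hR : (fun mv : {x // x ∈ frogMoves l} => gameAux n mv.1)
        = fun mv => gameAux m mv.1 := by
      funext mv; exact absurd (frogMoves_spec mv.2).1 (by omega)
    rw [hL, hR]
  | succ w ih =>
    intro l n m h hn hm
    obtain ⟨n, rfl⟩ : ∃ k, n = k + 1 := ⟨n - 1, by omega⟩
    obtain ⟨m, rfl⟩ : ∃ k, m = k + 1 := ⟨m - 1, by omega⟩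
    simp only [gameAux]
    have hL : (fun mv : {x // x ∈ toadMoves l} => gameAux n mv.1)
        = fun mv => gameAux m mv.1 := by
      funext mv
      have := (toadMoves_spec mv.2).1
      exact ih (by omega) (by omega) (by omega)
    have hR : (fun mv : {x // x ∈ frogMoves l} => gameAux n mv.1)
        = fun mv => gameAux m mv.1 := by
      funext mv
      have := (frogMoves_spec mv.2).1
      exact ih (by omega) (by omega) (by omega)
    rw [hL, hR]

lemma tfGame_def (l : List Cell) : tfGame l = PGame.mk {m // m ∈ toadMoves l} {m // m ∈ frogMoves l}
    (fun m => tfGame m.1) (fun m => tfGame m.1) := by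
  conv_lhs => rw [tfGame, gameAux]
  have hL : (fun mv : {x // x ∈ toadMoves l} => gameAux (wt l) mv.1)
      = fun mv => tfGame mv.1 := by
    funext mv
    have := (toadMoves_spec mv.2).1
    unfold tfGame
    exact gameAux_congr (wt l) (by omega) (by omega) (by omega)
  have hR : (fun mv : {x // x ∈ frogMoves l} => gameAux (wt l) mv.1)
      = fun mv => tfGame mv.1 := by
    funext mv
    have := (frogMoves_spec mv.2).1
    unfold tfGame
    exact gameAux_congr (wt l) (by omega) (by omega) (by omega)
  rw [hL, hR]
open PGame

lemma tfGame_le_zero {l : List Cell}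
    (H : ∀ m, m ∈ toadMoves l → ∃ m', m' ∈ frogMoves m ∧ tfGame m' ≤ 0) : tfGame l ≤ 0 := by
  rw [tfGame_def, PGame.le_zero_lf]
  rintro ⟨m, hm⟩
  simp only [PGame.moveLeft_mk]
  obtain ⟨m', hm', h⟩ := H m hm
  rw [tfGame_def m, PGame.lf_zero_le]
  exact ⟨⟨m', hm'⟩, h⟩

lemma tfGame_lf_zero {l m' : List Cell} (hm' : m' ∈ frogMoves l) (h : tfGame m' ≤ 0) :
    tfGame l ⧏ 0 := by
  rw [tfGame_def l, PGame.lf_zero_le]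
  exact ⟨⟨m', hm'⟩, h⟩

lemma tfGame_lf_star {l m' : List Cell} (hm' : m' ∈ frogMoves l) (h : tfGame m' ≤ PGame.star) :
    tfGame l ⧏ PGame.star := by
  rw [tfGame_def l]
  exact PGame.lf_of_moveRight_le (j := ⟨m', hm'⟩) h

lemma lf_star_of_le_zero {x : PGame} (h : x ≤ 0) : x ⧏ PGame.star :=
  h.trans_lf (by rw [PGame.zero_lf_le]; exact ⟨PUnit.unit, PGame.pg_le_refl _⟩)

lemma tfGame_le_star {l : List Cell} (H1 : ∀ m, m ∈ toadMoves l → tfGame m ⧏ PGame.star)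
    (H2 : tfGame l ⧏ 0) : tfGame l ≤ PGame.star := by
  rw [PGame.le_iff_forall_lf]
  constructor
  · rw [tfGame_def l]
    rintro ⟨m, hm⟩
    exact H1 m hm
  · intro j
    simpa using H2

lemma star_le_powHalf {n : ℕ} (hn : 1 ≤ n) : PGame.star ≤ PGame.powHalf n := by
  obtain ⟨m, rfl⟩ : ∃ k, n = k + 1 := ⟨n - 1, by omega⟩
  rw [PGame.le_iff_forall_lf]
  constructor
  · intro i
    simpa using PGame.zero_lf_powHalf (m + 1)
  · intro j
    have : (PGame.powHalf (m + 1)).moveRight j = PGame.powHalf m := rfl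
    rw [this]
    exact PGame.lf_of_moveRight_le (j := PUnit.unit) (PGame.zero_le_powHalf m)

/-! ### Move computation lemmas -/

lemma fm_T (t : List Cell) : frogMoves (T :: t) = (frogMoves t).map (T :: ·) := by simp [frogMoves]
lemma fm_F (t : List Cell) : frogMoves (F :: t) = (frogMoves t).map (F :: ·) := by simp [frogMoves]
lemma tm_F (t : List Cell) : toadMoves (F :: t) = (toadMoves t).map (F :: ·) := by simp [toadMoves]
lemma tm_E (t : List Cell) : toadMoves (E :: t) = (toadMoves t).map (E :: ·) := by simp [toadMoves]

lemma tm_T (t : List Cell) (h1 : ∀ r, t ≠ E :: r) (h2 : ∀ r, t ≠ F :: E :: r) :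
    toadMoves (T :: t) = (toadMoves t).map (T :: ·) := by
  rcases t with _ | ⟨a, t⟩
  · simp [toadMoves]
  rcases a with _ | _ | _
  · simp [toadMoves]
  · rcases t with _ | ⟨b, t⟩
    · simp [toadMoves]
    rcases b with _ | _ | _
    · simp [toadMoves]
    · simp [toadMoves]
    · exact absurd rfl (h2 t)
  · exact absurd rfl (h1 t)

lemma tm_repF (c : ℕ) : toadMoves (List.replicate c F) = [] := by
  induction c with
  | zero => rfl
  | succ c ih => rw [List.replicate_succ, tm_F, ih]; rfl

lemma tm_T_repF (c : ℕ) : toadMoves (T :: List.replicate c F) = [] := by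
  have h1 : ∀ r, List.replicate c F ≠ E :: r := by
    intro r h; cases c <;> simp [List.replicate_succ] at h
  have h2 : ∀ r, List.replicate c F ≠ F :: E :: r := by
    intro r h
    rcases c with _ | c
    · simp at h
    · rw [List.replicate_succ] at h
      injection h with _ h'
      cases c <;> simp [List.replicate_succ] at h'
  rw [tm_T _ h1 h2, tm_repF]
  rfl

lemma tm_repT_repF (m c : ℕ) : toadMoves (List.replicate m T ++ List.replicate c F) = [] := by
  induction m with
  | zero => simpa using tm_repF c
  | succ m ih =>
    have h1 : ∀ r, List.replicate m T ++ List.replicate c F ≠ E :: r := by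
      intro r h
      rcases m with _ | m <;> rcases c with _ | c <;> simp [List.replicate_succ] at h
    have h2 : ∀ r, List.replicate m T ++ List.replicate c F ≠ F :: E :: r := by
      intro r h
      rcases m with _ | m
      · simp only [List.replicate_zero, List.nil_append] at h
        rcases c with _ | c
        · exact absurd h (by simp)
        · rw [List.replicate_succ] at h
          injection h with _ h'
          cases c <;> simp [List.replicate_succ] at h'
      · rw [List.replicate_succ, List.cons_append] at h
        injection h with h' _
        exact absurd h' (by decide)
    rw [List.replicate_succ, List.cons_append, tm_T _ h1 h2, ih]
    rfl

lemma tm_prefix : ∀ (P : List Cell), E ∉ P → (P = [] ∨ P.getLast? = some F) →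
    ∀ s : List Cell, s.head? ≠ some E → toadMoves (P ++ s) = (toadMoves s).map (P ++ ·) := by
  intro P
  induction P with
  | nil => intro _ _ s _; simp
  | cons c P ih =>
    intro hE hlast s hs
    have hc : c ≠ E := fun h => hE (by simp [h])
    have hPE : E ∉ P := fun h => hE (by simp [h])
    rcases P with _ | ⟨d, P'⟩
    · have hcF : c = F := by
        rcases hlast with h | h
        · simp at h
        · simpa using h
      subst hcF
      rw [List.cons_append, List.nil_append, tm_F]
      simp
    · have hd : d ≠ E := fun h => hPE (by simp [h])
      have hlast' : (d :: P') = [] ∨ (d :: P').getLast? = some F := by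
        right
        rcases hlast with h | h
        · simp at h
        · rwa [List.getLast?_cons_cons] at h
      have hrec := ih hPE hlast' s hs
      have h1 : ∀ r, (d :: P') ++ s ≠ E :: r := by
        intro r h
        rw [List.cons_append] at h
        injection h with h' _
        exact hd h'
      have h2 : ∀ r, (d :: P') ++ s ≠ F :: E :: r := by
        intro r h
        rw [List.cons_append] at h
        injection h with h' h''
        rcases P' with _ | ⟨e, P''⟩
        · simp only [List.replicate_zero, List.nil_append] at h''
          exact hs (by rw [h'']; rfl)
        · rw [List.cons_append] at h''
          injection h'' with he _
          exact hPE (by simp [← he])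
      rcases c with _ | _ | _
      · rw [List.cons_append, tm_T _ h1 h2, hrec, List.map_map]
        rfl
      · rw [List.cons_append, tm_F, hrec, List.map_map]
        rfl
      · exact absurd rfl hc

lemma tm_T_FE (k : ℕ) (s : List Cell) :
    toadMoves (List.replicate k T ++ F :: E :: s) =
      (match k with
       | 0 => ([] : List (List Cell))
       | k' + 1 => [List.replicate k' T ++ E :: F :: T :: s]) ++
      (toadMoves s).map (fun t => List.replicate k T ++ F :: E :: t) := by
  induction k with
  | zero => simp [tm_F, tm_E, List.map_map]
  | succ k ih =>
    rcases k with _ | k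
    · simp only [List.replicate_succ, List.replicate_zero, List.cons_append, List.nil_append]
      simp [toadMoves, List.map_map]
    · have h1 : ∀ r, List.replicate (k + 1) T ++ F :: E :: s ≠ E :: r := by
        intro r h
        rw [List.replicate_succ, List.cons_append] at h
        injection h with h' _
        exact absurd h' (by decide)
      have h2 : ∀ r, List.replicate (k + 1) T ++ F :: E :: s ≠ F :: E :: r := by
        intro r h
        rw [List.replicate_succ, List.cons_append] at h
        injection h with h' _
        exact absurd h' (by decide)
      rw [List.replicate_succ (n := k + 1), List.cons_append, tm_T _ h1 h2, ih]
      simp [List.map_map, List.replicate_succ]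

lemma tm_repT_prefix (k : ℕ) (x : Cell) (hx : x ≠ E) (s : List Cell) :
    toadMoves (List.replicate k T ++ F :: x :: s) =
      (toadMoves (F :: x :: s)).map (List.replicate k T ++ ·) := by
  induction k with
  | zero => simp
  | succ k ih =>
    have h1 : ∀ r, List.replicate k T ++ F :: x :: s ≠ E :: r := by
      intro r h
      rcases k with _ | k <;> simp [List.replicate_succ] at h
    have h2 : ∀ r, List.replicate k T ++ F :: x :: s ≠ F :: E :: r := by
      intro r h
      rcases k with _ | k
      · simp only [List.replicate_zero, List.nil_append] at h
        injection h with _ h'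
        injection h' with h'' _
        exact hx h''
      · rw [List.replicate_succ, List.cons_append] at h
        injection h with h' _
        exact absurd h' (by decide)
    rw [List.replicate_succ, List.cons_append, tm_T _ h1 h2, ih, List.map_map]
    rfl

lemma fm_mem_append (P : List Cell) : ∀ {s m : List Cell}, m ∈ frogMoves s →
    P ++ m ∈ frogMoves (P ++ s) := by
  induction P with
  | nil => intro s m h; simpa using h
  | cons c P ih =>
    intro s m h
    rw [List.cons_append, List.cons_append]
    simp only [frogMoves, List.mem_append, List.mem_map]
    exact Or.inr ⟨P ++ m, ih h, rfl⟩

lemma fm_slide (r : List Cell) : F :: E :: r ∈ frogMoves (E :: F :: r) := by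
  simp [frogMoves]

lemma tm_main (L : List Cell) (hE : E ∉ L) (hlast : L = [] ∨ L.getLast? = some F)
    (a : ℕ) (s : List Cell) :
    toadMoves (L ++ (List.replicate a T ++ F :: E :: s)) =
      (match a with
       | 0 => ([] : List (List Cell))
       | a' + 1 => [L ++ (List.replicate a' T ++ E :: F :: T :: s)]) ++
      (toadMoves s).map (fun t => L ++ (List.replicate a T ++ F :: E :: t)) := by
  rw [tm_prefix L hE hlast _ (by rcases a with _ | a <;> simp [List.replicate_succ]), tm_T_FE]
  rcases a with _ | a <;> simp [List.map_map]

lemma tm_sC (c : ℕ) : toadMoves (F :: F :: E :: T :: List.replicate c F) = [] := by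
  simp [tm_F, tm_E, tm_T_repF]

lemma tm_sB (c : ℕ) : toadMoves (T :: F :: E :: List.replicate c F) =
    [E :: F :: T :: List.replicate c F] := by
  simp [toadMoves, tm_repF]

lemma tm_sX (b : ℕ) : toadMoves (T :: E :: List.replicate b F) =
    [E :: T :: List.replicate b F] := by
  simp [toadMoves, tm_repF]

section Families

variable {L : List Cell} (hE : E ∉ L) (hlast : L = [] ∨ L.getLast? = some F)

include hE hlast

theorem lemD : ∀ a k m c : ℕ,
    tfGame (L ++ (List.replicate a T ++ F :: E :: (List.replicate k T ++ F :: E ::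
      (List.replicate m T ++ List.replicate c F)))) ≤ 0 := by
  intro a
  induction a with
  | zero =>
    intro k
    induction k with
    | zero =>
      intro m c
      apply tfGame_le_zero
      intro mv hmv
      rw [tm_main L hE hlast, tm_T_FE, tm_repT_repF] at hmv
      simp at hmv
    | succ k ihk =>
      intro m c
      apply tfGame_le_zero
      intro mv hmv
      rw [tm_main L hE hlast, tm_T_FE, tm_repT_repF] at hmv
      simp at hmv
      subst hmv
      refine ⟨(L ++ F :: E :: List.replicate k T) ++
        (F :: E :: (T :: (List.replicate m T ++ List.replicate c F))), ?_, ?_⟩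
      · simpa using fm_mem_append (L ++ F :: E :: List.replicate k T)
          (fm_slide (T :: (List.replicate m T ++ List.replicate c F)))
      · simpa [List.replicate_succ] using ihk (m + 1) c
  | succ a iha =>
    intro k
    induction k with
    | zero =>
      intro m c
      apply tfGame_le_zero
      intro mv hmv
      rw [tm_main L hE hlast, tm_T_FE, tm_repT_repF] at hmv
      simp at hmv
      subst hmv
      refine ⟨(L ++ List.replicate a T) ++
        (F :: E :: (T :: F :: E :: (List.replicate m T ++ List.replicate c F))), ?_, ?_⟩
      · simpa using fm_mem_append (L ++ List.replicate a T)
          (fm_slide (T :: F :: E :: (List.replicate m T ++ List.replicate c F)))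
      · simpa [List.replicate_succ] using iha 1 m c
    | succ k ihk =>
      intro m c
      apply tfGame_le_zero
      intro mv hmv
      rw [tm_main L hE hlast, tm_T_FE, tm_repT_repF] at hmv
      simp at hmv
      rcases hmv with hmv | hmv <;> subst hmv
      · refine ⟨(L ++ List.replicate a T) ++
          (F :: E :: (T :: (List.replicate (k + 1) T ++ F :: E ::
            (List.replicate m T ++ List.replicate c F)))), ?_, ?_⟩
        · simpa using fm_mem_append (L ++ List.replicate a T)
            (fm_slide (T :: (List.replicate (k + 1) T ++ F :: E ::
              (List.replicate m T ++ List.replicate c F))))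
        · simpa [List.replicate_succ] using iha (k + 2) m c
      · refine ⟨(L ++ List.replicate (a + 1) T ++ F :: E :: List.replicate k T) ++
          (F :: E :: (T :: (List.replicate m T ++ List.replicate c F))), ?_, ?_⟩
        · simpa using fm_mem_append (L ++ List.replicate (a + 1) T ++ F :: E :: List.replicate k T)
            (fm_slide (T :: (List.replicate m T ++ List.replicate c F)))
        · simpa [List.replicate_succ] using ihk (m + 1) c

theorem lemC : ∀ a k c : ℕ,
    tfGame (L ++ (List.replicate a T ++ F :: E :: (List.replicate k T ++
      F :: F :: E :: T :: List.replicate c F))) ≤ 0 := by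
  intro a
  induction a with
  | zero =>
    intro k c
    apply tfGame_le_zero
    intro mv hmv
    rw [tm_main L hE hlast, tm_repT_prefix k F (by decide), tm_sC] at hmv
    simp at hmv
  | succ a iha =>
    intro k c
    apply tfGame_le_zero
    intro mv hmv
    rw [tm_main L hE hlast, tm_repT_prefix k F (by decide), tm_sC] at hmv
    simp at hmv
    subst hmv
    refine ⟨(L ++ List.replicate a T) ++
      (F :: E :: (T :: (List.replicate k T ++ F :: F :: E :: T :: List.replicate c F))), ?_, ?_⟩
    · simpa using fm_mem_append (L ++ List.replicate a T)
        (fm_slide (T :: (List.replicate k T ++ F :: F :: E :: T :: List.replicate c F)))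
    · simpa [List.replicate_succ] using iha (k + 1) c

theorem lemB : ∀ a k c : ℕ,
    tfGame (L ++ (List.replicate a T ++ F :: E :: (List.replicate k T ++
      F :: T :: F :: E :: List.replicate c F))) ≤ 0 := by
  intro a
  induction a with
  | zero =>
    intro k c
    apply tfGame_le_zero
    intro mv hmv
    rw [tm_main L hE hlast, tm_repT_prefix k T (by decide)] at hmv
    rw [tm_F, tm_sB] at hmv
    simp at hmv
    subst hmv
    refine ⟨(L ++ F :: E :: (List.replicate k T ++ [F])) ++
      (F :: E :: (T :: List.replicate c F)), ?_, ?_⟩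
    · simpa using fm_mem_append (L ++ F :: E :: (List.replicate k T ++ [F]))
        (fm_slide (T :: List.replicate c F))
    · simpa using lemC hE hlast 0 k c
  | succ a iha =>
    intro k c
    apply tfGame_le_zero
    intro mv hmv
    rw [tm_main L hE hlast, tm_repT_prefix k T (by decide)] at hmv
    rw [tm_F, tm_sB] at hmv
    simp at hmv
    rcases hmv with hmv | hmv <;> subst hmv
    · refine ⟨(L ++ List.replicate a T) ++
        (F :: E :: (T :: (List.replicate k T ++ F :: T :: F :: E :: List.replicate c F))), ?_, ?_⟩
      · simpa using fm_mem_append (L ++ List.replicate a T)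
          (fm_slide (T :: (List.replicate k T ++ F :: T :: F :: E :: List.replicate c F)))
      · simpa [List.replicate_succ] using iha (k + 1) c
    · refine ⟨(L ++ List.replicate (a + 1) T ++ F :: E :: (List.replicate k T ++ [F])) ++
        (F :: E :: (T :: List.replicate c F)), ?_, ?_⟩
      · simpa using fm_mem_append
          (L ++ List.replicate (a + 1) T ++ F :: E :: (List.replicate k T ++ [F]))
          (fm_slide (T :: List.replicate c F))
      · simpa using lemC hE hlast (a + 1) k c

theorem lemX : ∀ a k b : ℕ,
    tfGame (L ++ (List.replicate a T ++ F :: E :: (List.replicate k T ++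
      F :: T :: E :: List.replicate (b + 1) F))) ≤ PGame.star := by
  intro a
  induction a with
  | zero =>
    intro k b
    apply tfGame_le_star
    · intro mv hmv
      rw [tm_main L hE hlast, tm_repT_prefix k T (by decide)] at hmv
      rw [tm_F, tm_sX] at hmv
      simp at hmv
      subst hmv
      exact lf_star_of_le_zero
        (by simpa [List.replicate_succ] using lemD hE hlast 0 k 1 (b + 1))
    · refine tfGame_lf_zero (m' := (L ++ F :: E :: (List.replicate k T ++ [F, T])) ++
        (F :: E :: List.replicate b F)) ?_ ?_
      · simpa [List.replicate_succ] using fm_mem_append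
          (L ++ F :: E :: (List.replicate k T ++ [F, T])) (fm_slide (List.replicate b F))
      · simpa using lemB hE hlast 0 k b
  | succ a iha =>
    intro k b
    apply tfGame_le_star
    · intro mv hmv
      rw [tm_main L hE hlast, tm_repT_prefix k T (by decide)] at hmv
      rw [tm_F, tm_sX] at hmv
      simp at hmv
      rcases hmv with hmv | hmv <;> subst hmv
      · refine tfGame_lf_star (m' := (L ++ List.replicate a T) ++
          (F :: E :: (T :: (List.replicate k T ++ F :: T :: E :: List.replicate (b + 1) F)))) ?_ ?_
        · simpa using fm_mem_append (L ++ List.replicate a T)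
            (fm_slide (T :: (List.replicate k T ++ F :: T :: E :: List.replicate (b + 1) F)))
        · simpa [List.replicate_succ] using iha (k + 1) b
      · exact lf_star_of_le_zero
          (by simpa [List.replicate_succ] using lemD hE hlast (a + 1) k 1 (b + 1))
    · refine tfGame_lf_zero (m' := (L ++ List.replicate (a + 1) T ++
        F :: E :: (List.replicate k T ++ [F, T])) ++ (F :: E :: List.replicate b F)) ?_ ?_
      · simpa [List.replicate_succ] using fm_mem_append
          (L ++ List.replicate (a + 1) T ++ F :: E :: (List.replicate k T ++ [F, T]))
          (fm_slide (List.replicate b F))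
      · simpa using lemB hE hlast (a + 1) k b

end Families

/-- For any fixed `n ≥ 3` and all `a, k ≥ 0`, `b ≥ 1`:
`L T^a F □ T^k F T □ F^b ≤ 1/2^n`, where `L` is a `{T,F}`-string ending in `F`
(the empty prefix `L = []` being allowed). -/
theorem LTaF_box_TkFT_box_Fb_le (n a k b : ℕ) (hn : 3 ≤ n) (hb : 1 ≤ b)
    (L : List Cell) (hLE : Cell.E ∉ L)
    (hL : L = [] ∨ L.getLast? = some Cell.F) :
    tfGame (L ++ List.replicate a Cell.T ++ [Cell.F, Cell.E] ++
        List.replicate k Cell.T ++ [Cell.F, Cell.T, Cell.E] ++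
        List.replicate b Cell.F) ≤
      PGame.powHalf n := by
  obtain ⟨b', rfl⟩ : ∃ b'', b = b'' + 1 := ⟨b - 1, by omega⟩
  refine PGame.pg_le_trans ?_ (star_le_powHalf (by omega))
  simpa [List.replicate_succ] using lemX hLE hL a k b'
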